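/- arXiv:2402.03178 — 2 statements merged into one kernel-verified Lean document; each statement's English description precedes it below -/
import Mathlib

section
/- Let $E$ be a finite-dimensional real inner product space, $W$ a finite group acting on $E$ by orthogonal transformations, and $W_J \le W$ a subgroup. Suppose $E = E_J \oplus E_J^\perp$ is an orthogonal decomposition such that $W_J$ preserves $E_J$ and fixes every vector of $E_J^\perp$. For $v \in E$ write $v^J$ for the orthogonal projection of $v$ onto $E_J$. Then for every $\mu \in E$ and every $H \in E$ with $H = H^J + H^{J\perp}$ (where $H^{J\perp} = H - H^J$), one has $\sum_{s \in W} \sum_{s_J \in W_J} \det(s_J s)\, e^{\langle s_J s \mu, H\rangle} = \sum_{s \in W} \det(s)\, e^{\langle s\mu, H^{J\perp}\rangle} \sum_{s_J \in W_J} \det(s_J)\, e^{\langle s_J (s\mu)^J, H^J\rangle}$, where $\det : W \to \{\pm1\}$ is a fixed group homomorphism. -/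
open scoped RealInnerProductSpace

/-- The algebraic core of the key character formula: splitting the alternating sum over
`W` and a subgroup `W_J` that preserves `E_J` and fixes `E_J^⊥` pointwise. -/
theorem stmt6 (E : Type*) [NormedAddCommGroup E] [InnerProductSpace ℝ E]
    [FiniteDimensional ℝ E]
    (W : Type*) [Group W] [Fintype W] (ρ : W →* (E ≃ₗᵢ[ℝ] E))
    (WJ : Subgroup W) [Fintype WJ] (EJ : Submodule ℝ E)
    (hWJ : ∀ sJ ∈ WJ, ∀ v ∈ EJ, ρ sJ v ∈ EJ)
    (hfix : ∀ sJ ∈ WJ, ∀ v ∈ EJᗮ, ρ sJ v = v)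
    (d : W →* ℝ) (hd : ∀ w, d w = 1 ∨ d w = -1)
    (μ H : E) :
    ∑ s : W, ∑ sJ : WJ, d ((sJ : W) * s) * Real.exp ⟪ρ ((sJ : W) * s) μ, H⟫
      = ∑ s : W, d s * Real.exp ⟪ρ s μ, H - (Submodule.orthogonalProjectionOnto EJ H : E)⟫ *
          ∑ sJ : WJ, d (sJ : W) *
            Real.exp ⟪ρ (sJ : W) ((Submodule.orthogonalProjectionOnto EJ (ρ s μ) : E)),
              (Submodule.orthogonalProjectionOnto EJ H : E)⟫ := by
  refine Finset.sum_congr rfl fun s _ => ?_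
  rw [Finset.mul_sum]
  refine Finset.sum_congr rfl fun sJ _ => ?_
  set v := ρ s μ with hv
  set P : E := (Submodule.orthogonalProjectionOnto EJ v : E) with hP
  set HJ : E := (Submodule.orthogonalProjectionOnto EJ H : E) with hHJ
  have hPmem : P ∈ EJ := (Submodule.orthogonalProjectionOnto EJ v).2
  have hHJmem : HJ ∈ EJ := (Submodule.orthogonalProjectionOnto EJ H).2
  have hQmem : v - P ∈ EJᗮ := Submodule.sub_starProjection_mem_orthogonal v
  have hHperp : H - HJ ∈ EJᗮ := Submodule.sub_starProjection_mem_orthogonal H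
  have hρP : ρ (sJ : W) P ∈ EJ := hWJ _ sJ.2 _ hPmem
  have hρQ : ρ (sJ : W) (v - P) = v - P := hfix _ sJ.2 _ hQmem
  have key : ⟪ρ ((sJ : W) * s) μ, H⟫ = ⟪v, H - HJ⟫ + ⟪ρ (sJ : W) P, HJ⟫ := by
    have h1 : ρ ((sJ : W) * s) μ = ρ (sJ : W) P + (v - P) := by
      rw [map_mul]
      calc ρ (sJ : W) (ρ s μ) = ρ (sJ : W) (P + (v - P)) := by rw [add_sub_cancel]
        _ = ρ (sJ : W) P + ρ (sJ : W) (v - P) := map_add _ _ _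
        _ = ρ (sJ : W) P + (v - P) := by rw [hρQ]
    have h2 : ⟪ρ (sJ : W) P, H - HJ⟫ = 0 :=
      Submodule.inner_right_of_mem_orthogonal hρP hHperp
    have h3 : ⟪(v - P : E), HJ⟫ = 0 :=
      Submodule.inner_left_of_mem_orthogonal hHJmem hQmem
    have h4 : ⟪P, H - HJ⟫ = 0 :=
      Submodule.inner_right_of_mem_orthogonal hPmem hHperp
    have h5 : ⟪v, H - HJ⟫ = ⟪(v - P : E), H - HJ⟫ := by
      have := inner_sub_left (𝕜 := ℝ) v P (H - HJ)
      rw [this, h4, sub_zero]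
    rw [h1, inner_add_left, h5]
    have h6 : ⟪ρ (sJ : W) P, H⟫ = ⟪ρ (sJ : W) P, HJ⟫ := by
      have := inner_sub_right (𝕜 := ℝ) (ρ (sJ : W) P) H HJ
      rw [h2] at this
      linarith
    have h7 : ⟪(v - P : E), H⟫ = ⟪(v - P : E), H - HJ⟫ := by
      have := inner_sub_right (𝕜 := ℝ) (v - P) H HJ
      rw [h3] at this
      linarith
    rw [h6, h7]; ring
  rw [key, Real.exp_add, map_mul]
  ring
end

section
/- Let $\Sigma$ be the root system of type $A_r$ ($r \ge 1$) with extended simple system $\{\alpha_0, \alpha_1, \ldots, \alpha_r\}$. For a permutation $\mathcal{P} = (j_0, j_1, \ldots, j_r)$ of $\{0,1,\ldots,r\}$ and $i \in \{0,\ldots,r\}$, set $I_i = \{j_{i+1},\ldots,j_r\}$ and $n_i(\mathcal{P}) = |\Sigma^+| - |\Sigma^+_{I_i}|$, where $\Sigma_{I}$ is the parabolic subsystem generated by $\{\alpha_j : j \in I\}$ and $\Sigma^+_I$ its positive roots. Then for the permutation $\mathcal{P}_0 = (0,1,2,\ldots,r)$ one has $n_i(\mathcal{P}_0) = \binom{r+1}{2}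 - \binom{r-i+1}{2}$ for every $i$, and for every permutation $\mathcal{P}$ and every $i$, $n_i(\mathcal{P}_0) \le n_i(\mathcal{P})$. -/
/-- The standard basis vector `e i` of `ℝ^{r+1}`. -/
noncomputable def stdE (r : ℕ) (i : Fin (r + 1)) : Fin (r + 1) → ℝ := Pi.single i 1

/-- The extended simple roots of `A_r`: `α_j = e_j - e_{j+1}` (indices mod `r+1`). -/
noncomputable def extSimple (r : ℕ) (j : Fin (r + 1)) : Fin (r + 1) → ℝ :=
  stdE r j - stdE r (j + 1)

/-- The positive roots `e_i - e_j`, `i < j`, of the root system `A_r`. -/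
def posRoots (r : ℕ) : Set (Fin (r + 1) → ℝ) :=
  {v | ∃ i j : Fin (r + 1), i < j ∧ v = stdE r i - stdE r j}

/-- `n_i(𝒫) = |Σ⁺| - |Σ⁺_{I_i}|` where `I_i = {𝒫(i+1), …, 𝒫(r)}` and `Σ_{I}` is the
parabolic subsystem generated by `{α_j : j ∈ I}` (roots lying in the span). -/
noncomputable def peelN (r : ℕ) (P : Equiv.Perm (Fin (r + 1))) (i : Fin (r + 1)) : ℕ :=
  r * (r + 1) / 2 -
    Set.ncard {v ∈ posRoots r |
      v ∈ Submodule.span ℝ (extSimple r '' (P '' {j : Fin (r + 1) | i < j}))}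

namespace Peel

variable {r : ℕ}

open Fin.NatCast
open Fin.CommRing

lemma subval (a b : Fin (r+1)) :
    (a - b).val = if b.val ≤ a.val then a.val - b.val else a.val + (r+1) - b.val := by
  have hb := b.isLt
  have ha := a.isLt
  rw [Fin.sub_def]
  show ((r+1) - b.val + a.val) % (r+1) = _
  split_ifs with h
  · have h1 : (r+1) - b.val + a.val = (r+1) + (a.val - b.val) := by omega
    rw [h1, Nat.add_mod_left, Nat.mod_eq_of_lt (by omega)]
  · rw [Nat.mod_eq_of_lt (by omega)]
    omega

lemma addoneval (a : Fin (r+1)) : (a + 1).val = if a.val = r then 0 else a.val + 1 := by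
  rw [Fin.val_add_one]
  simp only [Fin.ext_iff, Fin.val_last]

lemma oneval (hr : 1 ≤ r) : (1 : Fin (r+1)).val = 1 := by
  have : ((1:ℕ) : Fin (r+1)).val = 1 := Fin.val_cast_of_lt (by omega)
  simpa using this

def arc (a b : Fin (r+1)) : Set (Fin (r+1)) := {k | (k - a).val < (b - a).val}

lemma mem_arc {k a b : Fin (r+1)} : k ∈ arc a b ↔ (k - a).val < (b - a).val := Iff.rfl

lemma self_mem_arc {a b : Fin (r+1)} (h : a ≠ b) : a ∈ arc a b := by
  rw [mem_arc]
  have h' : a.val ≠ b.val := fun hh => h (Fin.val_inj.mp hh)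
  have := a.isLt; have := b.isLt
  simp only [subval]
  split_ifs <;> omega

lemma pred_mem_arc (hr : 1 ≤ r) {a b : Fin (r+1)} (h : a ≠ b) : b - 1 ∈ arc a b := by
  rw [mem_arc]
  have h' : a.val ≠ b.val := fun hh => h (Fin.val_inj.mp hh)
  have := a.isLt; have := b.isLt
  simp only [subval, oneval hr]
  split_ifs <;> omega
lemma telescope (a b : Fin (r+1)) :
    stdE r a - stdE r b = ∑ t ∈ Finset.range ((b - a).val), extSimple r (a + (t : Fin (r+1))) := by
  have key : ∀ t : ℕ, extSimple r (a + (t : Fin (r+1)))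
      = stdE r (a + (t : Fin (r+1))) - stdE r (a + ((t+1 : ℕ) : Fin (r+1))) := by
    intro t
    have h : (a + (t : Fin (r+1))) + 1 = a + ((t+1 : ℕ) : Fin (r+1)) := by
      push_cast
      ring
    rw [extSimple, h]
  calc stdE r a - stdE r b
      = (fun t : ℕ => stdE r (a + (t : Fin (r+1)))) 0
        - (fun t : ℕ => stdE r (a + (t : Fin (r+1)))) ((b - a).val) := by
        simp only [Nat.cast_zero, add_zero, Fin.cast_val_eq_self]
        have : a + (b - a) = b := by ring
        rw [this]
    _ = ∑ t ∈ Finset.range ((b - a).val),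
          ((fun t : ℕ => stdE r (a + (t : Fin (r+1)))) t
            - (fun t : ℕ => stdE r (a + (t : Fin (r+1)))) (t+1)) :=
        (Finset.sum_range_sub' (fun t : ℕ => stdE r (a + (t : Fin (r+1)))) ((b - a).val)).symm
    _ = ∑ t ∈ Finset.range ((b - a).val), extSimple r (a + (t : Fin (r+1))) := by
        refine Finset.sum_congr rfl fun t _ => ?_
        rw [key]

lemma arc_subset_span {I : Set (Fin (r+1))} {a b : Fin (r+1)} (h : arc a b ⊆ I) :
    stdE r a - stdE r b ∈ Submodule.span ℝ (extSimple r '' I) := by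
  rw [telescope]
  refine Submodule.sum_mem _ fun t ht => Submodule.subset_span ⟨a + (t : Fin (r+1)), h ?_, rfl⟩
  rw [Finset.mem_range] at ht
  have hlt : t < r + 1 := lt_trans ht (b - a).isLt
  rw [mem_arc]
  have h1 : a + (t : Fin (r+1)) - a = (t : Fin (r+1)) := by ring
  rw [h1, Fin.val_cast_of_lt hlt]
  exact ht

set_option maxHeartbeats 1600000 in
lemma span_to_arc {I : Set (Fin (r+1))} {a b : Fin (r+1)} (hab : a ≠ b)
    (h : stdE r a - stdE r b ∈ Submodule.span ℝ (extSimple r '' I)) :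
    arc a b ⊆ I ∨ arc b a ⊆ I := by
  by_contra hc
  push_neg at hc
  obtain ⟨h1, h2⟩ := hc
  rw [Set.not_subset] at h1 h2
  obtain ⟨k1, hk1, hk1I⟩ := h1
  obtain ⟨k2, hk2, hk2I⟩ := h2
  classical
  set S : Finset (Fin (r+1)) :=
    Finset.univ.filter (fun k => (k - k1).val ≠ 0 ∧ (k - k1).val ≤ (k2 - k1).val) with hS
  set f : (Fin (r+1) → ℝ) →ₗ[ℝ] ℝ := ∑ m ∈ S, LinearMap.proj m with hf
  have hfstd : ∀ c : Fin (r+1), f (stdE r c) = if c ∈ S then 1 else 0 := by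
    intro c
    simp [hf, LinearMap.sum_apply, LinearMap.proj_apply, stdE, Pi.single_apply,
      Finset.sum_ite_eq']
  rw [mem_arc] at hk1 hk2
  have hab' : a.val ≠ b.val := fun hh => hab (Fin.val_inj.mp hh)
  have ha := a.isLt; have hb := b.isLt; have hK1 := k1.isLt; have hK2 := k2.isLt
  have hker : Submodule.span ℝ (extSimple r '' I) ≤ LinearMap.ker f := by
    rw [Submodule.span_le]
    rintro v ⟨j, hjI, rfl⟩
    have hjk1 : j.val ≠ k1.val := fun hh => hk1I (Fin.val_inj.mp hh ▸ hjI)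
    have hjk2 : j.val ≠ k2.val := fun hh => hk2I (Fin.val_inj.mp hh ▸ hjI)
    have hj := j.isLt
    have hmem : (j ∈ S) ↔ (j + 1 ∈ S) := by
      simp only [hS, Finset.mem_filter, Finset.mem_univ, true_and]
      simp only [subval, addoneval]
      split_ifs <;> omega
    simp only [SetLike.mem_coe, LinearMap.mem_ker, extSimple, map_sub, hfstd]
    by_cases hj' : j ∈ S
    · rw [if_pos hj', if_pos (hmem.mp hj')]; ring
    · rw [if_neg hj', if_neg (fun hh => hj' (hmem.mpr hh))]; ring
  have h0 : f (stdE r a - stdE r b) = 0 := hker h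
  rw [map_sub, hfstd, hfstd] at h0
  have haS : a ∉ S := by
    simp only [hS, Finset.mem_filter, Finset.mem_univ, true_and, not_and, ne_eq, not_not, not_le]
    intro hne
    simp only [subval] at hk1 hk2 hne ⊢
    split_ifs at hk1 hk2 hne ⊢ <;> omega
  have hbS : b ∈ S := by
    simp only [hS, Finset.mem_filter, Finset.mem_univ, true_and]
    constructor
    · simp only [subval] at hk1 hk2 ⊢
      split_ifs at hk1 hk2 ⊢ <;> omega
    · simp only [subval] at hk1 hk2 ⊢
      split_ifs at hk1 hk2 ⊢ <;> omega
  rw [if_neg haS, if_pos hbS] at h0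
  norm_num at h0
lemma stdE_injOn : Set.InjOn (fun p : Fin (r+1) × Fin (r+1) => stdE r p.1 - stdE r p.2)
    {p | p.1 < p.2} := by
  rintro ⟨a, b⟩ hab ⟨c, d⟩ hcd h
  simp only [Set.mem_setOf_eq] at hab hcd
  have h1 := congrFun h a
  have h2 := congrFun h b
  simp only [stdE, Pi.sub_apply, Pi.single_apply] at h1 h2
  have hab' : a ≠ b := ne_of_lt hab
  have hcd' : c ≠ d := ne_of_lt hcd
  split_ifs at h1 h2 <;> simp_all <;> norm_num at *
lemma count_eq (I : Set (Fin (r+1))) :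
    {v ∈ posRoots r | v ∈ Submodule.span ℝ (extSimple r '' I)}.ncard
      = {p : Fin (r+1) × Fin (r+1) |
          p.1 < p.2 ∧ (arc p.1 p.2 ⊆ I ∨ arc p.2 p.1 ⊆ I)}.ncard := by
  have hset : {v ∈ posRoots r | v ∈ Submodule.span ℝ (extSimple r '' I)}
      = (fun p : Fin (r+1) × Fin (r+1) => stdE r p.1 - stdE r p.2) ''
        {p | p.1 < p.2 ∧ (arc p.1 p.2 ⊆ I ∨ arc p.2 p.1 ⊆ I)} := by
    ext v
    simp only [Set.mem_setOf_eq, Set.mem_image, posRoots]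
    constructor
    · rintro ⟨⟨x, y, hxy, rfl⟩, hspan⟩
      exact ⟨(x, y), ⟨hxy, span_to_arc (ne_of_lt hxy) hspan⟩, rfl⟩
    · rintro ⟨⟨x, y⟩, ⟨hxy, hor⟩, rfl⟩
      refine ⟨⟨x, y, hxy, rfl⟩, ?_⟩
      rcases hor with h | h
      · exact arc_subset_span h
      · have h2 := Submodule.neg_mem _ (arc_subset_span h)
        rwa [neg_sub] at h2
  rw [hset]
  exact Set.ncard_image_of_injOn (stdE_injOn.mono fun p hp => hp.1)

lemma ord_inj (hr : 1 ≤ r) {I : Set (Fin (r+1))} {k0 : Fin (r+1)} (hk0 : k0 ∉ I)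
    {x y u w : Fin (r+1)} (hxy : x ≠ y) (huw : u ≠ w)
    (hx : arc x y ⊆ I) (hu : arc u w ⊆ I)
    (hpair : ({x, y - 1} : Set (Fin (r+1))) = {u, w - 1}) : x = u ∧ y = w := by
  rcases Set.pair_eq_pair_iff.mp hpair with ⟨h1, h2⟩ | ⟨h1, h2⟩
  · exact ⟨h1, sub_left_inj.mp h2⟩
  · by_cases hxu : x = u
    · refine ⟨hxu, ?_⟩
      have hw : w - 1 = y - 1 := by rw [← h1, hxu, ← h2]
      exact (sub_left_inj.mp hw).symm
    · exfalso
      have hk0x : ¬ (k0 - x).val < (y - x).val := fun hm => hk0 (hx hm)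
      have hk0u : ¬ (k0 - u).val < (w - u).val := fun hm => hk0 (hu hm)
      have e1 : x.val = (w - 1).val := by rw [h1]
      have e2 : (y - 1).val = u.val := by rw [h2]
      have hxy' : x.val ≠ y.val := fun hh => hxy (Fin.val_inj.mp hh)
      have huw' : u.val ≠ w.val := fun hh => huw (Fin.val_inj.mp hh)
      have hxu' : x.val ≠ u.val := fun hh => hxu (Fin.val_inj.mp hh)
      have := x.isLt; have := y.isLt; have := u.isLt; have := w.isLt; have := k0.isLt
      simp only [subval, oneval hr] at hk0x hk0u e1 e2
      split_ifs at hk0x hk0u e1 e2 <;> omega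

set_option maxHeartbeats 1600000 in
lemma count_le (hr : 1 ≤ r) {I : Set (Fin (r+1))} (hI : I ≠ Set.univ) :
    {p : Fin (r+1) × Fin (r+1) |
        p.1 < p.2 ∧ (arc p.1 p.2 ⊆ I ∨ arc p.2 p.1 ⊆ I)}.ncard
      ≤ (I.ncard + 1).choose 2 := by
  classical
  obtain ⟨k0, hk0⟩ : ∃ k0, k0 ∉ I := by
    by_contra hcon; push_neg at hcon; exact hI (Set.eq_univ_of_forall hcon)
  set If : Finset (Fin (r+1)) := Finset.univ.filter (· ∈ I) with hIf
  have hIcard : I.ncard = If.card := by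
    rw [show I = ↑If by ext z; simp [hIf], Set.ncard_coe_finset]
  set T : Set (Fin (r+1) × Fin (r+1)) :=
    {p | p.1 < p.2 ∧ (arc p.1 p.2 ⊆ I ∨ arc p.2 p.1 ⊆ I)} with hT
  set g : Fin (r+1) × Fin (r+1) → Finset (Fin (r+1)) := fun p =>
    if arc p.1 p.2 ⊆ I then {p.1, p.2 - 1} else {p.2, p.1 - 1} with hg
  have hgT : ∀ p ∈ T, ∃ (x y : Fin (r+1)), x ≠ y ∧ arc x y ⊆ I ∧ g p = {x, y - 1} ∧
      ((p.1 = x ∧ p.2 = y) ∨ (p.1 = y ∧ p.2 = x)) := by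
    rintro ⟨a, b⟩ ⟨hab, hor⟩
    by_cases h : arc a b ⊆ I
    · exact ⟨a, b, ne_of_lt hab, h, by simp [hg, h], Or.inl ⟨rfl, rfl⟩⟩
    · exact ⟨b, a, (ne_of_lt hab).symm, hor.resolve_left h, by simp [hg, h],
        Or.inr ⟨rfl, rfl⟩⟩
  have hinj : Set.InjOn g T := by
    intro p hp q hq hpq
    obtain ⟨x, y, hxy, hx, hgp, hpc⟩ := hgT p hp
    obtain ⟨u, w, huw, hu, hgq, hqc⟩ := hgT q hq
    have hpair : ({x, y - 1} : Set (Fin (r+1))) = {u, w - 1} := by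
      have h' : ({x, y - 1} : Finset (Fin (r+1))) = {u, w - 1} := by rw [← hgp, ← hgq, hpq]
      have := congrArg (fun s : Finset (Fin (r+1)) => (↑s : Set (Fin (r+1)))) h'
      simpa using this
    obtain ⟨hxu, hyw⟩ := ord_inj hr hk0 hxy huw hx hu hpair
    subst hxu; subst hyw
    have hp1 := hp.1
    have hq1 := hq.1
    rcases hpc with ⟨e1, e2⟩ | ⟨e1, e2⟩ <;> rcases hqc with ⟨f1, f2⟩ | ⟨f1, f2⟩ <;>
      first
        | (exact Prod.ext (e1.trans f1.symm) (e2.trans f2.symm))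
        | (exfalso; rw [e1, e2] at hp1; rw [f1, f2] at hq1; exact absurd hq1 (lt_asymm hp1))
  have himg : g '' T ⊆ ↑(If.powersetCard 1 ∪ If.powersetCard 2) := by
    rintro s ⟨p, hp, rfl⟩
    obtain ⟨x, y, hxy, hx, hgp, -⟩ := hgT p hp
    rw [hgp]
    have hxI : x ∈ If := by simp only [hIf, Finset.mem_filter, Finset.mem_univ, true_and]
                            exact hx (self_mem_arc hxy)
    have hyI : y - 1 ∈ If := by simp only [hIf, Finset.mem_filter, Finset.mem_univ, true_and]
                                exact hx (pred_mem_arc hr hxy)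
    simp only [Finset.coe_union, Set.mem_union, Finset.mem_coe, Finset.mem_powersetCard]
    by_cases hd : x = y - 1
    · left
      rw [← hd, Finset.insert_eq_self.mpr (Finset.mem_singleton_self x)]
      exact ⟨Finset.singleton_subset_iff.mpr hxI, Finset.card_singleton x⟩
    · right
      refine ⟨Finset.insert_subset hxI (Finset.singleton_subset_iff.mpr hyI), ?_⟩
      rw [Finset.card_insert_of_notMem (by simp [hd]), Finset.card_singleton]
  calc T.ncard = (g '' T).ncard := (Set.ncard_image_of_injOn hinj).symm
    _ ≤ (↑(If.powersetCard 1 ∪ If.powersetCard 2) : Set (Finset (Fin (r+1)))).ncard :=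
        Set.ncard_le_ncard himg (Set.toFinite _)
    _ = (If.powersetCard 1 ∪ If.powersetCard 2).card := Set.ncard_coe_finset _
    _ ≤ (If.powersetCard 1).card + (If.powersetCard 2).card := Finset.card_union_le _ _
    _ = If.card.choose 1 + If.card.choose 2 := by
        rw [Finset.card_powersetCard, Finset.card_powersetCard]
    _ = (If.card + 1).choose 2 := by
        rw [Nat.choose_succ_succ, Nat.choose_one_right]
    _ = (I.ncard + 1).choose 2 := by rw [hIcard]
lemma id_arc_iff {i a b : Fin (r+1)} (hab : a < b) :
    (arc a b ⊆ {j : Fin (r+1) | i < j} ∨ arc b a ⊆ {j : Fin (r+1) | i < j}) ↔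
      ((a = 0 ∨ i < a) ∧ (b = 0 ∨ i < b)) := by
  have hab' : a.val < b.val := hab
  have := a.isLt; have := b.isLt; have := i.isLt
  constructor
  · rintro (h | h)
    · have hia : i < a := h (self_mem_arc (ne_of_lt hab))
      exact ⟨Or.inr hia, Or.inr (lt_trans hia hab)⟩
    · have hib : i < b := h (self_mem_arc (ne_of_lt hab).symm)
      refine ⟨?_, Or.inr hib⟩
      left
      by_contra ha0
      have ha0' : a.val ≠ 0 := fun hh => ha0 (Fin.val_inj.mp hh)
      have h0 : (0 : Fin (r+1)) ∈ arc b a := by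
        rw [mem_arc]
        simp only [subval]
        have h0v : (0 : Fin (r+1)).val = 0 := by simp
        split_ifs <;> omega
      have := h h0
      simp only [Set.mem_setOf_eq, Fin.lt_def, Fin.val_zero] at this
      omega
  · rintro ⟨ha, hb⟩
    rcases ha with ha | ha
    · right
      have hb' : i.val < b.val := by
        rcases hb with hb | hb
        · exfalso
          have : b.val = 0 := Fin.val_inj.mpr hb ▸ rfl
          omega
        · exact hb
      intro k hk
      rw [mem_arc] at hk
      have hk' := k.isLt
      have ha' : a.val = 0 := by rw [ha]; rfl
      simp only [Set.mem_setOf_eq, Fin.lt_def]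
      simp only [subval] at hk
      split_ifs at hk <;> omega
    · left
      intro k hk
      rw [mem_arc] at hk
      have hk' := k.isLt
      have ha' : i.val < a.val := ha
      simp only [Set.mem_setOf_eq, Fin.lt_def]
      simp only [subval] at hk
      split_ifs at hk <;> omega

lemma count_id (i : Fin (r+1)) :
    {p : Fin (r+1) × Fin (r+1) | p.1 < p.2 ∧
        (arc p.1 p.2 ⊆ {j : Fin (r+1) | i < j} ∨ arc p.2 p.1 ⊆ {j : Fin (r+1) | i < j})}.ncard
      = (r - i.val + 1).choose 2 := by
  classical
  set V : Finset (Fin (r+1)) := insert 0 (Finset.Ioi i) with hV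
  have hVcard : V.card = r - i.val + 1 := by
    have h0 : (0 : Fin (r+1)) ∉ Finset.Ioi i := by
      simp only [Finset.mem_Ioi]
      exact fun h => absurd (Fin.lt_def.mp h) (by simp)
    rw [hV, Finset.card_insert_of_notMem h0, Fin.card_Ioi]
    have := i.isLt
    omega
  have hset : {p : Fin (r+1) × Fin (r+1) | p.1 < p.2 ∧
        (arc p.1 p.2 ⊆ {j : Fin (r+1) | i < j} ∨ arc p.2 p.1 ⊆ {j : Fin (r+1) | i < j})}
      = ↑((V.offDiag).filter fun p => p.1 < p.2) := by
    ext ⟨a, b⟩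
    simp only [Set.mem_setOf_eq, Finset.coe_filter, Finset.mem_offDiag, hV, Finset.mem_insert,
      Finset.mem_Ioi, Set.mem_setOf_eq]
    constructor
    · rintro ⟨hab, hor⟩
      obtain ⟨ha, hb⟩ := (id_arc_iff hab).mp hor
      exact ⟨⟨ha, hb, ne_of_lt hab⟩, hab⟩
    · rintro ⟨⟨ha, hb, -⟩, hab⟩
      exact ⟨hab, (id_arc_iff hab).mpr ⟨ha, hb⟩⟩
  rw [hset, Set.ncard_coe_finset]
  have hsplit := Finset.card_filter_add_card_filter_not
    (s := V.offDiag) (fun p : Fin (r+1) × Fin (r+1) => p.1 < p.2)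
  have hswap : ((V.offDiag).filter fun p : Fin (r+1) × Fin (r+1) => p.1 < p.2).card
      = ((V.offDiag).filter fun p : Fin (r+1) × Fin (r+1) => ¬ p.1 < p.2).card := by
    apply Finset.card_bij' (fun p _ => Prod.swap p) (fun p _ => Prod.swap p)
    · rintro ⟨a, b⟩ hp
      simp only [Finset.mem_filter, Finset.mem_offDiag] at hp ⊢
      exact ⟨⟨hp.1.2.1, hp.1.1, (hp.1.2.2).symm⟩, not_lt.mpr (le_of_lt hp.2)⟩
    · rintro ⟨a, b⟩ hp
      simp only [Finset.mem_filter, Finset.mem_offDiag] at hp ⊢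
      exact ⟨⟨hp.1.2.1, hp.1.1, (hp.1.2.2).symm⟩,
        lt_of_le_of_ne (not_lt.mp hp.2) (hp.1.2.2).symm⟩
    · intro p hp; simp
    · intro p hp; simp
  have hoff := Finset.offDiag_card V
  obtain ⟨A, hA⟩ : ∃ A, ((V.offDiag).filter fun p : Fin (r+1) × Fin (r+1) => p.1 < p.2).card = A :=
    ⟨_, rfl⟩
  obtain ⟨vv, hvv⟩ : ∃ vv, V.card * V.card - V.card = vv := ⟨_, rfl⟩
  have h2 : A + A = vv := by
    rw [← hA, ← hvv, ← hoff, ← hsplit, hswap]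
  have hval : V.card * (V.card - 1) = vv := by
    rw [← hvv]
    rcases V.card with _ | k
    · simp
    · have h1 : (k+1) * (k+1) = (k+1) * k + (k+1) := by ring
      rw [Nat.succ_sub_one, h1, Nat.add_sub_cancel]
  have hval2 : (r - i.val + 1) * (r - i.val + 1 - 1) = vv := by rw [← hVcard]; exact hval
  rw [hA, Nat.choose_two_right, hval2]
  omega
lemma Ioi_ncard (i : Fin (r+1)) : {j : Fin (r+1) | i < j}.ncard = r - i.val := by
  have h : {j : Fin (r+1) | i < j} = ↑(Finset.Ioi i) := by ext z; simp
  rw [h, Set.ncard_coe_finset, Fin.card_Ioi]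
  omega

end Peel

/-- Type-`A_r` case of the peeling lemma: the identity permutation `𝒫₀ = (0,1,…,r)`
peels the root system most slowly, with
`n_i(𝒫₀) = C(r+1,2) - C(r-i+1,2) ≤ n_i(𝒫)` for every permutation `𝒫`. -/
theorem stmt18 (r : ℕ) (hr : 1 ≤ r) :
    (∀ i : Fin (r + 1),
      peelN r 1 i = (r + 1).choose 2 - (r - (i : ℕ) + 1).choose 2) ∧
    (∀ (P : Equiv.Perm (Fin (r + 1))) (i : Fin (r + 1)), peelN r 1 i ≤ peelN r P i) := by

  have htot : r * (r + 1) / 2 = (r + 1).choose 2 := by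
    rw [Nat.choose_two_right, Nat.add_sub_cancel, Nat.mul_comm]
  have hone : ∀ i : Fin (r+1), ⇑(1 : Equiv.Perm (Fin (r+1))) '' {j : Fin (r+1) | i < j}
      = {j : Fin (r+1) | i < j} := by
    intro i
    simp
  have hid : ∀ i : Fin (r+1), peelN r 1 i = (r + 1).choose 2 - (r - i.val + 1).choose 2 := by
    intro i
    rw [peelN, hone i, Peel.count_eq, Peel.count_id, htot]
  refine ⟨hid, ?_⟩
  intro P i
  have hm : (⇑P '' {j : Fin (r+1) | i < j}).ncard = r - i.val := by
    rw [Set.ncard_image_of_injOn (P.injective.injOn), Peel.Ioi_ncard]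
  have hne : ⇑P '' {j : Fin (r+1) | i < j} ≠ Set.univ := by
    intro hcon
    have h' := hm
    rw [hcon, Set.ncard_univ, Nat.card_eq_fintype_card, Fintype.card_fin] at h'
    have := i.isLt
    omega
  have hle := Peel.count_le hr hne
  rw [hm] at hle
  rw [hid i, peelN, Peel.count_eq, htot]
  exact Nat.sub_le_sub_left hle _
end
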